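/- Pressing a black vertex of a linear (path) black-and-white graph yields a graph which is the disjoint union of a linear graph and the isolated white pressed vertex. (Self-reducibility of the pressing game on linear graphs.) -/

import Mathlib

structure BW (V : Type) where
  adj : V → V → Bool
  black : V → Bool
  symm : ∀ u w, adj u w = adj w u
  irrefl : ∀ v, adj v v = false

variable {V : Type} [DecidableEq V]

/-- Pressing a vertex `v`: neighbors toggle color, pairs of neighbors toggle
adjacency, and `v` becomes white and isolated. -/
def press (G : BW V) (v : V) : BW V where
  adj u w :=
    if u = v ∨ w = v ∨ u = w then false
    else xor (G.adj u w) (G.adj u v && G.adj w v)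
  black u := if u = v then false else xor (G.black u) (G.adj u v)
  symm := by
    intro u w
    by_cases h1 : u = v <;> by_cases h2 : w = v <;> by_cases h3 : u = w <;>
      simp_all [G.symm u w, Bool.xor_comm, Bool.and_comm] <;> tauto
  irrefl := by intro u; simp

/-- The graph obtained after pressing the vertices of a list in order. -/
def pressPath (G : BW V) : List V → BW V
  | [] => G
  | v :: P => pressPath (press G v) P

/-- A pressing path is valid if every vertex is black when it is pressed. -/
def ValidPath (G : BW V) : List V → Prop
  | [] => True
  | v :: P => G.black v = true ∧ ValidPath (press G v) P

/-- The all-white, edgeless graph. -/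
def AllWhiteEmpty (G : BW V) : Prop :=
  (∀ v, G.black v = false) ∧ ∀ u w, G.adj u w = false

/-- A successful pressing path: valid and leading to the all-white empty graph. -/
def Successful (G : BW V) (P : List V) : Prop :=
  ValidPath G P ∧ AllWhiteEmpty (pressPath G P)

/-- The underlying simple graph of a black-and-white graph. -/
def BW.toSimple (G : BW V) : SimpleGraph V where
  Adj u w := G.adj u w = true
  symm := ⟨fun u w h => (G.symm w u).trans h⟩
  loopless := ⟨fun v h => by simp [G.irrefl] at h⟩

/-- `l` enumerates the vertices as a path: `G` is linear with vertex order `l`. -/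
def IsPathList (G : BW V) (l : List V) : Prop :=
  l.Nodup ∧ (∀ v, v ∈ l) ∧
    ∀ u w, G.adj u w = true ↔ ∃ i,
      (l[i]? = some u ∧ l[i+1]? = some w) ∨ (l[i]? = some w ∧ l[i+1]? = some u)

/-- A linear (path) black-and-white graph. -/
def IsLinear (G : BW V) : Prop := ∃ l, IsPathList G l

/-- Adjacency step in the metagraph of successful pressing paths:
their longest common subsequence misses at most 2 presses. -/
def Step (G : BW V) (P Q : List V) : Prop :=
  Successful G P ∧ Successful G Q ∧
    ∃ R : List V, R.Sublist P ∧ R.Sublist Q ∧ P.length ≤ R.length + 2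

/-- Transposition of two consecutive presses which are non-adjacent at that moment. -/
def SwapStep (G : BW V) (P Q : List V) : Prop :=
  ∃ A u w B, P = A ++ u :: w :: B ∧ Q = A ++ w :: u :: B ∧
    (pressPath G A).adj u w = false

/-- The induced black-and-white graph on a subset of the vertices. -/
def BW.restrict (G : BW V) (p : V → Prop) [DecidablePred p] : BW {u // p u} where
  adj u w := G.adj u.1 w.1
  black u := G.black u.1
  symm := fun u w => G.symm u.1 w.1
  irrefl := fun u => G.irrefl u.1

/-- The all-black path graph on `n` vertices. -/
def pathAllBlack (n : ℕ) : BW (Fin n) where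
  adj i j := decide (i.1 + 1 = j.1 ∨ j.1 + 1 = i.1)
  black _ := true
  symm := by intro u w; simp [or_comm]
  irrefl := by intro v; simp

section helpers
variable {V : Type} [DecidableEq V]

private lemma uniq {l : List V} (h : l.Nodup) {i j : ℕ} {x : V}
    (hi : l[i]? = some x) (hj : l[j]? = some x) : i = j := by
  have hlt : i < l.length := by
    by_contra hc
    rw [List.getElem?_eq_none (by omega)] at hi
    simp at hi
  exact (List.getElem?_inj hlt h).mp (hi.trans hj.symm)

private lemma L_at (A B : List V) (v : V) : (A ++ v :: B)[A.length]? = some v := by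
  rw [List.getElem?_append_right le_rfl]; simp

private lemma L_left {A : List V} (B : List V) (v : V) {i : ℕ} (h : i < A.length) :
    (A ++ v :: B)[i]? = A[i]? := by
  rw [List.getElem?_append]; simp [h]

private lemma L_right (A B : List V) (v : V) (j : ℕ) :
    (A ++ v :: B)[A.length + 1 + j]? = B[j]? := by
  rw [List.getElem?_append_right (by omega)]
  have : A.length + 1 + j - A.length = j + 1 := by omega
  rw [this]; simp

private lemma M_left {A : List V} (B : List V) {i : ℕ} (h : i < A.length) :
    (A ++ B)[i]? = A[i]? := by
  rw [List.getElem?_append]; simp [h]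

private lemma M_right (A B : List V) (j : ℕ) : (A ++ B)[A.length + j]? = B[j]? := by
  rw [List.getElem?_append_right (by omega)]
  congr 1; omega

private lemma pos_v {A B : List V} {v : V} (hnd : (A ++ v :: B).Nodup) {i : ℕ}
    (h : (A ++ v :: B)[i]? = some v) : i = A.length :=
  uniq hnd h (L_at A B v)

/-- Characterization of neighbors of `v` in the path `A ++ v :: B`. -/
private lemma nbr {A B : List V} {v : V} (hnd : (A ++ v :: B).Nodup) (x : V) :
    (∃ i, ((A ++ v :: B)[i]? = some x ∧ (A ++ v :: B)[i+1]? = some v) ∨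
          ((A ++ v :: B)[i]? = some v ∧ (A ++ v :: B)[i+1]? = some x)) ↔
    (A.getLast? = some x ∨ B.head? = some x) := by
  constructor
  · rintro ⟨i, ⟨h1, h2⟩ | ⟨h1, h2⟩⟩
    · have ha : i + 1 = A.length := pos_v hnd h2
      left
      rw [List.getLast?_eq_getElem?]
      have hi : i < A.length := by omega
      rw [← L_left B v (by omega : A.length - 1 < A.length)]
      have : A.length - 1 = i := by omega
      rw [this]; exact h1
    · have ha : i = A.length := pos_v hnd h1
      right
      rw [List.head?_eq_getElem?, ← L_right A B v 0]
      have : A.length + 1 + 0 = i + 1 := by omega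
      rw [this]; exact h2
  · rintro (h | h)
    · rw [List.getLast?_eq_getElem?] at h
      have hlen : A.length - 1 < A.length := by
        by_contra hc
        have h0 : A.length = 0 := by omega
        have hA : A = [] := List.length_eq_zero_iff.mp h0
        rw [hA] at h; simp at h
      refine ⟨A.length - 1, Or.inl ⟨?_, ?_⟩⟩
      · rw [L_left B v hlen]; exact h
      · have : A.length - 1 + 1 = A.length := by omega
        rw [this]; exact L_at A B v
    · rw [List.head?_eq_getElem?] at h
      exact ⟨A.length, Or.inr ⟨L_at A B v, (L_right A B v 0).trans h⟩⟩

/-- Consecutive pairs in `A ++ B` vs consecutive pairs in `A ++ v :: B`. -/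
private lemma consec {A B : List V} {v u w : V} (hnd : (A ++ v :: B).Nodup)
    (hu : u ≠ v) (hw : w ≠ v) :
    (∃ i, (A ++ B)[i]? = some u ∧ (A ++ B)[i+1]? = some w) ↔
    ((∃ i, (A ++ v :: B)[i]? = some u ∧ (A ++ v :: B)[i+1]? = some w) ∨
     (A.getLast? = some u ∧ B.head? = some w)) := by
  constructor
  · rintro ⟨i, h1, h2⟩
    by_cases hc1 : i + 1 < A.length
    · left
      refine ⟨i, ?_, ?_⟩
      · rw [L_left B v (by omega)]; rw [M_left B (by omega)] at h1; exact h1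
      · rw [L_left B v hc1]; rw [M_left B hc1] at h2; exact h2
    · by_cases hc2 : i + 1 = A.length
      · right
        constructor
        · rw [List.getLast?_eq_getElem?]
          rw [M_left B (by omega : i < A.length)] at h1
          have : A.length - 1 = i := by omega
          rw [this]; exact h1
        · rw [List.head?_eq_getElem?, ← M_right A B 0]
          have : A.length + 0 = i + 1 := by omega
          rw [this]; exact h2
      · -- i ≥ A.length
        have hge : A.length ≤ i := by omega
        left
        have h1' : B[i - A.length]? = some u := by
          rw [← M_right A B (i - A.length), show A.length + (i - A.length) = i by omega]
          exact h1
        have h2' : B[i + 1 - A.length]? = some w := by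
          rw [← M_right A B (i + 1 - A.length),
            show A.length + (i + 1 - A.length) = i + 1 by omega]
          exact h2
        refine ⟨i + 1, ?_, ?_⟩
        · have hL := L_right A B v (i - A.length)
          rw [show A.length + 1 + (i - A.length) = i + 1 by omega] at hL
          rw [hL]; exact h1'
        · have hL := L_right A B v (i + 1 - A.length)
          rw [show A.length + 1 + (i + 1 - A.length) = i + 1 + 1 by omega] at hL
          rw [hL]; exact h2'
  · rintro (⟨i, h1, h2⟩ | ⟨h1, h2⟩)
    · have hi1 : i ≠ A.length := fun h => hu (by rw [h, L_at A B v] at h1; exact (Option.some_inj.mp h1).symm ▸ rfl)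
      have hi2 : i + 1 ≠ A.length := fun h => hw (by rw [h, L_at A B v] at h2; exact (Option.some_inj.mp h2).symm ▸ rfl)
      by_cases hc : i + 1 < A.length
      · refine ⟨i, ?_, ?_⟩
        · rw [M_left B (by omega)]; rw [L_left B v (by omega)] at h1; exact h1
        · rw [M_left B hc]; rw [L_left B v hc] at h2; exact h2
      · have hge : A.length + 1 ≤ i := by omega
        refine ⟨i - 1, ?_, ?_⟩
        · rw [show i - 1 = A.length + (i - 1 - A.length) by omega, M_right]
          rw [show i = A.length + 1 + (i - A.length - 1) by omega, L_right] at h1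
          rwa [show i - 1 - A.length = i - A.length - 1 by omega]
        · rw [show i - 1 + 1 = A.length + (i - A.length) by omega, M_right]
          rw [show i + 1 = A.length + 1 + (i - A.length) by omega, L_right] at h2
          exact h2
    · rw [List.getLast?_eq_getElem?] at h1
      have hlen : A.length - 1 < A.length := by
        by_contra hc
        have h0 : A.length = 0 := by omega
        have : A = [] := List.length_eq_zero_iff.mp h0
        rw [this] at h1; simp at h1
      rw [List.head?_eq_getElem?] at h2
      refine ⟨A.length - 1, ?_, ?_⟩
      · rw [M_left B hlen]; exact h1
      · rw [show A.length - 1 + 1 = A.length + 0 by omega, M_right]; exact h2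

end helpers

theorem stmt3 {V : Type} [DecidableEq V] (G : BW V) (hG : IsLinear G)
    (v : V) (hv : G.black v = true) :
    (press G v).black v = false ∧ (∀ w, (press G v).adj v w = false) ∧
    IsLinear ((press G v).restrict (fun u => u ≠ v)) := by
  obtain ⟨l, hnd, hmem, hadj⟩ := hG
  obtain ⟨A, B, rfl⟩ := List.append_of_mem (hmem v)
  refine ⟨by simp [press], fun w => by simp [press], ?_⟩
  -- v not in A ++ B
  have hvAB : v ∉ A ++ B := by
    intro h
    rcases List.mem_append.mp h with h | h
    · exact (List.Nodup.notMem (List.nodup_middle.mp hnd)) (List.mem_append.mpr (Or.inl h))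
    · exact (List.Nodup.notMem (List.nodup_middle.mp hnd)) (List.mem_append.mpr (Or.inr h))
  have hall : ∀ x ∈ A ++ B, x ≠ v := fun x hx hxv => hvAB (hxv ▸ hx)
  have hmnd : (A ++ B).Nodup := by
    have hsub : (A ++ B).Sublist (A ++ v :: B) :=
      List.Sublist.append (List.Sublist.refl A) (List.sublist_cons_self v B)
    exact hnd.sublist hsub
  refine ⟨(A ++ B).pmap (fun x hx => (⟨x, hx⟩ : {u // u ≠ v})) hall, ?_, ?_, ?_⟩
  · exact List.Nodup.pmap (fun a _ b _ h => by simpa using h) hmnd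
  · intro u
    rw [List.mem_pmap]
    refine ⟨u.1, ?_, rfl⟩
    have := hmem u.1
    rcases List.mem_append.mp this with h | h
    · exact List.mem_append.mpr (Or.inl h)
    · rcases List.mem_cons.mp h with h | h
      · exact absurd h u.2
      · exact List.mem_append.mpr (Or.inr h)
  · intro u w
    have hm' : ∀ (i : ℕ) (x : {u // u ≠ v}),
        ((A ++ B).pmap (fun x hx => (⟨x, hx⟩ : {u // u ≠ v})) hall)[i]? = some x ↔
        (A ++ B)[i]? = some x.1 := by
      intro i x
      rw [List.getElem?_pmap, Option.pmap_eq_some_iff]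
      constructor
      · rintro ⟨a, h, ha, rfl⟩; exact ha
      · intro h; exact ⟨x.1, x.2, h, rfl⟩
    -- characterize neighbors of v
    have hnbrU : ∀ x : V, G.adj x v = true ↔ (A.getLast? = some x ∨ B.head? = some x) := by
      intro x
      rw [hadj x v]
      exact nbr hnd x
    by_cases hne : u.1 = w.1
    · have huw : u = w := Subtype.ext hne
      subst huw
      constructor
      · intro h
        exfalso
        simp [BW.restrict, press] at h
      · rintro ⟨i, ⟨h1, h2⟩ | ⟨h1, h2⟩⟩ <;>
        · rw [hm'] at h1 h2
          have := uniq hmnd h1 h2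
          omega
    · -- main case
      have hLHS : ((press G v).restrict (fun u => u ≠ v)).adj u w = true ↔
          (xor (G.adj u.1 w.1) (G.adj u.1 v && G.adj w.1 v)) = true := by
        simp [BW.restrict, press, u.2, w.2, hne]
      rw [hLHS]
      have hRHS : (∃ i, (((A ++ B).pmap (fun x hx => (⟨x, hx⟩ : {u // u ≠ v})) hall)[i]? = some u ∧
            ((A ++ B).pmap (fun x hx => (⟨x, hx⟩ : {u // u ≠ v})) hall)[i+1]? = some w) ∨
            (((A ++ B).pmap (fun x hx => (⟨x, hx⟩ : {u // u ≠ v})) hall)[i]? = some w ∧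
            ((A ++ B).pmap (fun x hx => (⟨x, hx⟩ : {u // u ≠ v})) hall)[i+1]? = some u)) ↔
          ((∃ i, (A ++ B)[i]? = some u.1 ∧ (A ++ B)[i+1]? = some w.1) ∨
           (∃ i, (A ++ B)[i]? = some w.1 ∧ (A ++ B)[i+1]? = some u.1)) := by
        constructor
        · rintro ⟨i, ⟨h1, h2⟩ | ⟨h1, h2⟩⟩
          · exact Or.inl ⟨i, (hm' i u).mp h1, (hm' (i+1) w).mp h2⟩
          · exact Or.inr ⟨i, (hm' i w).mp h1, (hm' (i+1) u).mp h2⟩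
        · rintro (⟨i, h1, h2⟩ | ⟨i, h1, h2⟩)
          · exact ⟨i, Or.inl ⟨(hm' i u).mpr h1, (hm' (i+1) w).mpr h2⟩⟩
          · exact ⟨i, Or.inr ⟨(hm' i w).mpr h1, (hm' (i+1) u).mpr h2⟩⟩
      rw [hRHS, consec hnd u.2 w.2, consec hnd w.2 u.2]
      -- now pure logic
      set P : Prop := G.adj u.1 w.1 = true with hP
      have hPiff : P ↔
          ((∃ i, (A ++ v :: B)[i]? = some u.1 ∧ (A ++ v :: B)[i+1]? = some w.1) ∨
           (∃ i, (A ++ v :: B)[i]? = some w.1 ∧ (A ++ v :: B)[i+1]? = some u.1)) := by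
        rw [hP, hadj]
        constructor
        · rintro ⟨i, h | h⟩
          · exact Or.inl ⟨i, h⟩
          · exact Or.inr ⟨i, h⟩
        · rintro (⟨i, h⟩ | ⟨i, h⟩)
          · exact ⟨i, Or.inl h⟩
          · exact ⟨i, Or.inr h⟩
      set J : Prop := (A.getLast? = some u.1 ∧ B.head? = some w.1) ∨
                      (A.getLast? = some w.1 ∧ B.head? = some u.1) with hJ
      -- N ↔ J
      have hNJ : ((G.adj u.1 v && G.adj w.1 v) = true) ↔ J := by
        rw [Bool.and_eq_true, hnbrU u.1, hnbrU w.1, hJ]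
        constructor
        · rintro ⟨hu' | hu', hw' | hw'⟩
          · exact absurd (Option.some_inj.mp (hu'.symm.trans hw')) hne
          · exact Or.inl ⟨hu', hw'⟩
          · exact Or.inr ⟨hw', hu'⟩
          · exact absurd (Option.some_inj.mp (hu'.symm.trans hw')) hne
        · rintro (⟨h1, h2⟩ | ⟨h1, h2⟩)
          · exact ⟨Or.inl h1, Or.inr h2⟩
          · exact ⟨Or.inr h2, Or.inl h1⟩
      -- mutual exclusion: P and J cannot both hold
      have hexcl : ¬(P ∧ J) := by
        rintro ⟨hp, hj⟩
        -- from J derive positions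
        have key : ∀ x y : V, A.getLast? = some x → B.head? = some y →
            ¬ ∃ i, (A ++ v :: B)[i]? = some x ∧ (A ++ v :: B)[i+1]? = some y := by
          intro x y hx hy ⟨i, h1, h2⟩
          rw [List.getLast?_eq_getElem?] at hx
          have hlen : A.length - 1 < A.length := by
            by_contra hc
            have h0 : A.length = 0 := by omega
            have : A = [] := List.length_eq_zero_iff.mp h0
            rw [this] at hx; simp at hx
          have hxl : (A ++ v :: B)[A.length - 1]? = some x := by
            rw [L_left B v hlen]; exact hx
          rw [List.head?_eq_getElem?] at hy
          have hyl : (A ++ v :: B)[A.length + 1]? = some y :=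
            (L_right A B v 0).trans hy
          have hi : i = A.length - 1 := uniq hnd h1 hxl
          have hi2 : i + 1 = A.length + 1 := uniq hnd h2 hyl
          omega
        rw [hPiff] at hp
        rcases hj with ⟨h1, h2⟩ | ⟨h1, h2⟩ <;> rcases hp with ⟨i, hi1, hi2⟩ | ⟨i, hi1, hi2⟩
        · exact key _ _ h1 h2 ⟨i, hi1, hi2⟩
        · -- getLast? = u, head? = w, but w before u consecutive
          -- positions: w at A.length+1 or..., u at A.length-1; l[i]=w, l[i+1]=u
          rw [List.getLast?_eq_getElem?] at h1
          have hlen : A.length - 1 < A.length := by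
            by_contra hc
            have h0 : A.length = 0 := by omega
            have : A = [] := List.length_eq_zero_iff.mp h0
            rw [this] at h1; simp at h1
          have hul : (A ++ v :: B)[A.length - 1]? = some u.1 := by
            rw [L_left B v hlen]; exact h1
          rw [List.head?_eq_getElem?] at h2
          have hwl : (A ++ v :: B)[A.length + 1]? = some w.1 :=
            (L_right A B v 0).trans h2
          have hi : i = A.length + 1 := uniq hnd hi1 hwl
          have hi2' : i + 1 = A.length - 1 := uniq hnd hi2 hul
          omega
        · rw [List.getLast?_eq_getElem?] at h1
          have hlen : A.length - 1 < A.length := by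
            by_contra hc
            have h0 : A.length = 0 := by omega
            have : A = [] := List.length_eq_zero_iff.mp h0
            rw [this] at h1; simp at h1
          have hwl : (A ++ v :: B)[A.length - 1]? = some w.1 := by
            rw [L_left B v hlen]; exact h1
          rw [List.head?_eq_getElem?] at h2
          have hul : (A ++ v :: B)[A.length + 1]? = some u.1 :=
            (L_right A B v 0).trans h2
          have hi : i = A.length + 1 := uniq hnd hi1 hul
          have hi2' : i + 1 = A.length - 1 := uniq hnd hi2 hwl
          omega
        · exact key _ _ h1 h2 ⟨i, hi1, hi2⟩
      -- final boolean logic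
      rw [Bool.xor_iff_ne]
      constructor
      · intro h
        by_cases hp : P
        · rw [hPiff] at hp
          rcases hp with ⟨i, h1⟩ | ⟨i, h1⟩
          · exact Or.inl (Or.inl ⟨i, h1⟩)
          · exact Or.inr (Or.inl ⟨i, h1⟩)
        · -- then N must be true
          have hNt : (G.adj u.1 v && G.adj w.1 v) = true := by
            cases hgt : G.adj u.1 w.1 with
            | true => exact absurd hgt hp
            | false =>
              cases hnt : (G.adj u.1 v && G.adj w.1 v) with
              | true => rfl
              | false => rw [hgt, hnt] at h; exact absurd rfl h
          rcases hNJ.mp hNt with ⟨h1, h2⟩ | ⟨h1, h2⟩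
          · exact Or.inl (Or.inr ⟨h1, h2⟩)
          · exact Or.inr (Or.inr ⟨h1, h2⟩)
      · intro h
        have hPJ : P ∨ J := by
          rcases h with (h | h) | (h | h)
          · exact Or.inl (hPiff.mpr (Or.inl h))
          · exact Or.inr (Or.inl h)
          · exact Or.inl (hPiff.mpr (Or.inr h))
          · exact Or.inr (Or.inr h)
        rcases hPJ with hp | hj
        · have hgt : G.adj u.1 w.1 = true := hp
          have hnf : (G.adj u.1 v && G.adj w.1 v) = false := by
            cases hnt : (G.adj u.1 v && G.adj w.1 v) with
            | false => rfl
            | true => exact absurd ⟨hp, hNJ.mp hnt⟩ hexcl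
          rw [hgt, hnf]; simp
        · have hnt : (G.adj u.1 v && G.adj w.1 v) = true := hNJ.mpr hj
          have hgf : G.adj u.1 w.1 = false := by
            cases hgt : G.adj u.1 w.1 with
            | false => rfl
            | true => exact absurd ⟨hgt, hj⟩ hexcl
          rw [hgf, hnt]; simp
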